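/- Let a, b, c, d ∈ ℂ with c ∉ ℤ_{≤0}, d ∉ ℤ and b − d = m ∈ ℤ_{>0}. Then for every n ∈ ℤ_{≥0} and every z ∈ ℂ, the exact identity ₂F₂[a, b−n; c, d−n; z] = Σ_{k=0}^{m} ((a)_k (d−b)_k)/((c)_k (d−n)_k) · (−z)^k/k! · ₁F₁[a+k; c+k; z] holds (the sum terminates because (d−b)_k = 0 for k > m). -/

import Mathlib

/-- The Pochhammer symbol `(a)_n = a (a+1) ⋯ (a+n-1)`. -/
noncomputable def poch (a : ℂ) (n : ℕ) : ℂ := ∏ i ∈ Finset.range n, (a + i)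

/-- The confluent hypergeometric function `₁F₁[a; b; z]`. -/
noncomputable def F11 (a b z : ℂ) : ℂ :=
  ∑' n : ℕ, poch a n / poch b n * z ^ n / Nat.factorial n

/-- The generalized hypergeometric function `₂F₂[a₁, a₂; b₁, b₂; z]`. -/
noncomputable def F22 (a1 a2 b1 b2 z : ℂ) : ℂ :=
  ∑' n : ℕ, poch a1 n * poch a2 n / (poch b1 n * poch b2 n) * z ^ n / Nat.factorial n

lemma poch_zero (a : ℂ) : poch a 0 = 1 := by simp [poch]

lemma poch_succ (a : ℂ) (n : ℕ) : poch a (n + 1) = poch a n * (a + n) :=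
  Finset.prod_range_succ _ _

lemma poch_succ' (a : ℂ) (n : ℕ) : poch a (n + 1) = a * poch (a + 1) n := by
  unfold poch
  rw [Finset.prod_range_succ']
  rw [mul_comm]
  congr 1
  · simp
  · apply Finset.prod_congr rfl
    intro i _
    push_cast
    ring

lemma poch_add (a : ℂ) (k j : ℕ) : poch a (k + j) = poch a k * poch (a + k) j := by
  unfold poch
  rw [Finset.prod_range_add]
  congr 1
  apply Finset.prod_congr rfl
  intro i _
  push_cast
  ring

lemma poch_ne_zero {a : ℂ} (h : ∀ i : ℕ, a + i ≠ 0) (n : ℕ) : poch a n ≠ 0 :=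
  Finset.prod_ne_zero_iff.mpr fun i _ => h i

lemma poch_neg_nat (m k : ℕ) : poch (-(m : ℂ)) k = (-1) ^ k * (m.descFactorial k : ℂ) := by
  induction k with
  | zero => simp [poch]
  | succ k ih =>
    rw [poch_succ, ih, Nat.descFactorial_succ]
    rcases le_or_gt k m with h | h
    · have hmk : ((m - k : ℕ) : ℂ) = (m : ℂ) - k := by
        push_cast [h]
        ring
      push_cast [hmk]
      ring
    · have h0 : m.descFactorial k = 0 := Nat.descFactorial_eq_zero_iff_lt.mpr h
      simp [h0]

lemma descFactorial_pascal (m k : ℕ) :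
    (m + 1).descFactorial (k + 1) = m.descFactorial (k + 1) + (k + 1) * m.descFactorial k := by
  rw [Nat.succ_descFactorial_succ, Nat.descFactorial_succ]
  rcases le_or_gt k m with h | h
  · have hh : m - k + (k + 1) = m + 1 := by omega
    rw [← hh, add_mul]
  · simp [Nat.descFactorial_eq_zero_iff_lt.mpr h]

lemma poch_rec (x : ℂ) (N : ℕ) : poch (x + 1) (N + 1) = poch x (N + 1) + (N + 1) * poch (x + 1) N := by
  rw [poch_succ, poch_succ']
  ring

lemma vandermonde (m : ℕ) : ∀ (N : ℕ) (e : ℂ),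
    poch (e + m) N =
      ∑ k ∈ Finset.range (N + 1),
        (N.choose k : ℂ) * (m.descFactorial k : ℂ) * poch (e + k) (N - k) := by
  induction m with
  | zero =>
    intro N e
    rw [Finset.sum_eq_single 0]
    · simp
    · intro k _ hk
      have h0 : Nat.descFactorial 0 k = 0 :=
        Nat.descFactorial_eq_zero_iff_lt.mpr (Nat.pos_of_ne_zero hk)
      simp [h0]
    · intro h
      exact absurd (Finset.mem_range.mpr (Nat.succ_pos N)) h
  | succ m ih =>
    intro N e
    cases N with
    | zero => simp [poch]
    | succ N =>
      rw [Finset.sum_range_succ']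
      have hterm : ∀ j ∈ Finset.range (N + 1),
          ((N + 1).choose (j + 1) : ℂ) * ((m + 1).descFactorial (j + 1) : ℂ) *
              poch (e + ↑(j + 1)) (N + 1 - (j + 1))
          = ((N + 1).choose (j + 1) : ℂ) * (m.descFactorial (j + 1) : ℂ) *
              poch (e + ↑(j + 1)) (N + 1 - (j + 1))
            + (N + 1 : ℂ) * (((N).choose j : ℂ) * (m.descFactorial j : ℂ) *
              poch ((e + 1) + ↑j) (N - j)) := by
        intro j hj
        have h1 : (m + 1).descFactorial (j + 1)
            = m.descFactorial (j + 1) + (j + 1) * m.descFactorial j := descFactorial_pascal m j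
        have h2 : (N + 1) * N.choose j = (N + 1).choose (j + 1) * (j + 1) :=
          Nat.add_one_mul_choose_eq N j
        have h3 : e + ↑(j + 1) = (e + 1) + ↑j := by push_cast; ring
        have h4 : N + 1 - (j + 1) = N - j := by omega
        rw [h1, h3, h4]
        push_cast
        have h2' : ((N : ℂ) + 1) * (N.choose j : ℂ) = ((N + 1).choose (j + 1) : ℂ) * ((j : ℂ) + 1) := by
          exact_mod_cast congrArg (fun t : ℕ => (t : ℂ)) h2
        linear_combination (-1 * ↑(m.descFactorial j) * poch (e + 1 + ↑j) (N - j)) * h2'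
      rw [Finset.sum_congr rfl hterm, Finset.sum_add_distrib, ← Finset.mul_sum,
        ← ih N (e + 1)]
      have e1 : e + ((m : ℂ) + 1) = (e + ↑m) + 1 := by ring
      have e2 : e + 1 + (m : ℂ) = (e + ↑m) + 1 := by ring
      push_cast
      rw [e1, e2, poch_rec (e + ↑m) N, ih (N + 1) e, Finset.sum_range_succ']
      push_cast
      simp [Nat.descFactorial_zero]
      ring

lemma summable_hyp (a c z : ℂ) (hc : ∀ i : ℕ, c + (i : ℂ) ≠ 0) :
    Summable (fun j : ℕ => poch a j / poch c j * z ^ j / (j.factorial : ℂ)) := by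
  obtain ⟨M, hM0, hM⟩ : ∃ M : ℝ, 0 < M ∧ ∀ i : ℕ, ‖a + (i : ℂ)‖ ≤ M * ‖c + (i : ℂ)‖ := by
    set N : ℕ := ⌈‖a‖ + 2 * ‖c‖⌉₊ with hN
    have hsum0 : (0:ℝ) ≤ ∑ i ∈ Finset.range N, ‖a + (i : ℂ)‖ / ‖c + (i : ℂ)‖ :=
      Finset.sum_nonneg fun i _ => by positivity
    refine ⟨2 + ∑ i ∈ Finset.range N, ‖a + (i : ℂ)‖ / ‖c + (i : ℂ)‖, by positivity, ?_⟩
    intro i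
    have hci : (0 : ℝ) < ‖c + (i : ℂ)‖ := norm_pos_iff.mpr (hc i)
    rcases lt_or_ge i N with h | h
    · have h1 : ‖a + (i : ℂ)‖ / ‖c + (i : ℂ)‖ ≤
          ∑ j ∈ Finset.range N, ‖a + (j : ℂ)‖ / ‖c + (j : ℂ)‖ := by
        apply Finset.single_le_sum (f := fun j : ℕ => ‖a + (j : ℂ)‖ / ‖c + (j : ℂ)‖)
          (fun j _ => by positivity) (Finset.mem_range.mpr h)
      have h2 : ‖a + (i : ℂ)‖ ≤ (‖a + (i : ℂ)‖ / ‖c + (i : ℂ)‖) * ‖c + (i : ℂ)‖ := by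
        rw [div_mul_cancel₀ _ (ne_of_gt hci)]
      nlinarith
    · have hi : ‖a‖ + 2 * ‖c‖ ≤ (i : ℝ) := le_trans (Nat.le_ceil _) (Nat.cast_le.mpr h)
      have h1 : ‖a + (i : ℂ)‖ ≤ ‖a‖ + i := by
        refine (norm_add_le _ _).trans ?_
        simp
      have h2 : (i : ℝ) - ‖c‖ ≤ ‖c + (i : ℂ)‖ := by
        have h3 : ‖(i : ℂ)‖ ≤ ‖c + (i : ℂ)‖ + ‖c‖ := by
          calc ‖(i : ℂ)‖ = ‖(c + i) + (-c)‖ := by ring_nf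
            _ ≤ ‖c + (i : ℂ)‖ + ‖(-c)‖ := norm_add_le _ _
            _ = ‖c + (i : ℂ)‖ + ‖c‖ := by rw [norm_neg]
        have h4 : ‖(i : ℂ)‖ = (i : ℝ) := by
          rw [Complex.norm_natCast]
        linarith
      nlinarith
  apply Summable.of_norm_bounded (g := fun j => (M * ‖z‖) ^ j / (j.factorial : ℝ))
  · have := Real.summable_pow_div_factorial (M * ‖z‖)
    exact this
  intro j
  have hcj : poch c j ≠ 0 := poch_ne_zero hc j
  have hcjn : (0 : ℝ) < ‖poch c j‖ := norm_pos_iff.mpr hcj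
  have hpoch : ‖poch a j‖ ≤ M ^ j * ‖poch c j‖ := by
    unfold poch
    rw [norm_prod, norm_prod]
    calc ∏ i ∈ Finset.range j, ‖a + (i : ℂ)‖
        ≤ ∏ i ∈ Finset.range j, (M * ‖c + (i : ℂ)‖) :=
          Finset.prod_le_prod (fun i _ => norm_nonneg _) (fun i _ => hM i)
      _ = M ^ j * ∏ i ∈ Finset.range j, ‖c + (i : ℂ)‖ := by
          rw [Finset.prod_mul_distrib, Finset.prod_const, Finset.card_range]
  have hfac : (0 : ℝ) < (j.factorial : ℝ) := by positivity
  rw [norm_div, norm_mul, norm_div, norm_pow]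
  rw [Complex.norm_natCast]
  rw [mul_pow]
  have hratio : ‖poch a j‖ / ‖poch c j‖ ≤ M ^ j := by
    rw [div_le_iff₀ hcjn]
    exact hpoch
  calc ‖poch a j‖ / ‖poch c j‖ * ‖z‖ ^ j / (j.factorial : ℝ)
      ≤ M ^ j * ‖z‖ ^ j / (j.factorial : ℝ) := by
        gcongr
      _ = M ^ j * ‖z‖ ^ j / (j.factorial : ℝ) := rfl

lemma tsum_shift (f : ℕ → ℂ) (k : ℕ) :
    ∑' j : ℕ, f j = ∑' N : ℕ, if k ≤ N then f (N - k) else 0 := by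
  have hinj : Function.Injective (fun j : ℕ => j + k) := add_left_injective k
  have hsupp : Function.support (fun N : ℕ => if k ≤ N then f (N - k) else 0) ⊆
      Set.range (fun j : ℕ => j + k) := by
    intro N hN
    by_contra hR
    have hNk : N < k := by
      by_contra hk
      exact hR ⟨N - k, by simpa using Nat.sub_add_cancel (Nat.not_lt.mp hk)⟩
    simp [Nat.not_le.mpr hNk] at hN
  have h := Function.Injective.tsum_eq hinj
    (f := fun N : ℕ => if k ≤ N then f (N - k) else 0) hsupp
  rw [← h]
  apply tsum_congr
  intro j
  simp [Nat.le_add_left, Nat.add_sub_cancel]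

lemma summable_shift {f : ℕ → ℂ} (k : ℕ) (hf : Summable f) :
    Summable (fun N : ℕ => if k ≤ N then f (N - k) else 0) := by
  have hinj : Function.Injective (fun j : ℕ => j + k) := add_left_injective k
  have hz : ∀ N ∉ Set.range (fun j : ℕ => j + k),
      (if k ≤ N then f (N - k) else 0) = 0 := by
    intro N hR
    have hNk : N < k := by
      by_contra hk
      exact hR ⟨N - k, by simpa using Nat.sub_add_cancel (Nat.not_lt.mp hk)⟩
    simp [Nat.not_le.mpr hNk]
  have hcomp : ((fun N : ℕ => if k ≤ N then f (N - k) else 0) ∘ (fun j : ℕ => j + k)) = f := by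
    funext j
    simp [Nat.le_add_left, Nat.add_sub_cancel]
  exact (Function.Injective.summable_iff hinj hz).mp (by rw [hcomp]; exact hf)

lemma perN (a c e z : ℂ) (m : ℕ)
    (hce : ∀ i : ℕ, c + (i : ℂ) ≠ 0) (hee : ∀ i : ℕ, e + (i : ℂ) ≠ 0) (N : ℕ) :
    poch a N * poch (e + m) N / (poch c N * poch e N) * z ^ N / (N.factorial : ℂ) =
    ∑ k ∈ Finset.range (m + 1),
      if k ≤ N then
        poch a k * poch (-(m : ℂ)) k / (poch c k * poch e k) * (-z) ^ k / (k.factorial : ℂ) *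
          (poch (a + k) (N - k) / poch (c + k) (N - k) * z ^ (N - k) / ((N - k).factorial : ℂ))
      else 0 := by
  have hck : ∀ k : ℕ, ∀ i : ℕ, (c + (k : ℂ)) + i ≠ 0 := by
    intro k i h
    apply hce (k + i)
    push_cast
    linear_combination h
  have hek : ∀ k : ℕ, ∀ i : ℕ, (e + (k : ℂ)) + i ≠ 0 := by
    intro k i h
    apply hee (k + i)
    push_cast
    linear_combination h
  set Q : ℂ := poch a N * z ^ N / (poch c N * poch e N * (N.factorial : ℂ)) with hQ
  have hF : ∀ k : ℕ,
      (if k ≤ N then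
        poch a k * poch (-(m : ℂ)) k / (poch c k * poch e k) * (-z) ^ k / (k.factorial : ℂ) *
          (poch (a + k) (N - k) / poch (c + k) (N - k) * z ^ (N - k) / ((N - k).factorial : ℂ))
      else 0)
      = (N.choose k : ℂ) * (m.descFactorial k : ℂ) * poch (e + k) (N - k) * Q := by
    intro k
    rcases le_or_gt k N with hk | hk
    · rw [if_pos hk]
      have h1 : poch a N = poch a k * poch (a + k) (N - k) := by
        rw [← poch_add]
        congr 1
        omega
      have h2 : poch c N = poch c k * poch (c + k) (N - k) := by
        rw [← poch_add]
        congr 1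
        omega
      have h3 : poch e N = poch e k * poch (e + k) (N - k) := by
        rw [← poch_add]
        congr 1
        omega
      have h4 : ((N.factorial : ℂ)) = (N.choose k : ℂ) * (k.factorial : ℂ) * ((N - k).factorial : ℂ) := by
        exact_mod_cast congrArg (fun t : ℕ => (t : ℂ)) (Nat.choose_mul_factorial_mul_factorial hk).symm
      have h5 : z ^ N = z ^ k * z ^ (N - k) := by
        rw [← pow_add]
        congr 1
        omega
      have hc1 : poch c k ≠ 0 := poch_ne_zero hce k
      have hc2 : poch (c + k) (N - k) ≠ 0 := poch_ne_zero (hck k) _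
      have he1 : poch e k ≠ 0 := poch_ne_zero hee k
      have he2 : poch (e + k) (N - k) ≠ 0 := poch_ne_zero (hek k) _
      have hf1 : (k.factorial : ℂ) ≠ 0 := by exact_mod_cast k.factorial_ne_zero
      have hf2 : ((N - k).factorial : ℂ) ≠ 0 := by exact_mod_cast (N - k).factorial_ne_zero
      have hch : (N.choose k : ℂ) ≠ 0 := by
        exact_mod_cast (Nat.choose_pos hk).ne'
      have hneg : ((-1 : ℂ)) ^ k * (-1 : ℂ) ^ k = 1 := by
        rw [← mul_pow]
        norm_num
      rw [hQ, h1, h2, h3, h4, h5, poch_neg_nat, neg_pow z]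
      field_simp
      linear_combination (poch a k * (m.descFactorial k : ℂ) * z ^ k *
        (poch (a + ↑k) (N - k) * z ^ (N - k))) * hneg
    · rw [if_neg (by omega)]
      have : N.choose k = 0 := Nat.choose_eq_zero_of_lt hk
      simp [this]
  rw [Finset.sum_congr rfl (fun k _ => hF k)]
  have hL : ∀ L : ℕ, m ≤ L → N ≤ L →
      ∑ k ∈ Finset.range (m + 1), (N.choose k : ℂ) * (m.descFactorial k : ℂ) * poch (e + k) (N - k) * Q
      = ∑ k ∈ Finset.range (L + 1), (N.choose k : ℂ) * (m.descFactorial k : ℂ) * poch (e + k) (N - k) * Q := by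
    intro L hmL hNL
    apply Finset.sum_subset
    · exact Finset.range_subset_range.mpr (by omega)
    · intro k _ hk
      have : m.descFactorial k = 0 :=
        Nat.descFactorial_eq_zero_iff_lt.mpr (by simp [Finset.mem_range] at hk; omega)
      simp [this]
  have hN' : ∑ k ∈ Finset.range (N + 1), (N.choose k : ℂ) * (m.descFactorial k : ℂ) * poch (e + k) (N - k) * Q
      = ∑ k ∈ Finset.range (max m N + 1), (N.choose k : ℂ) * (m.descFactorial k : ℂ) * poch (e + k) (N - k) * Q := by
    apply Finset.sum_subset
    · exact Finset.range_subset_range.mpr (by omega)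
    · intro k _ hk
      have : N.choose k = 0 :=
        Nat.choose_eq_zero_of_lt (by simp [Finset.mem_range] at hk; omega)
      simp [this]
  rw [hL (max m N) (le_max_left _ _) (le_max_right _ _), ← hN', ← Finset.sum_mul,
    ← vandermonde m N e]
  rw [hQ]
  ring

set_option maxHeartbeats 1000000 in
/-- Remark after Theorem 4.3: when `b − d = m ∈ ℤ_{>0}`, the expansion of
`₂F₂[a, b−n; c, d−n; z]` terminates and is exact. -/
theorem F22_terminating_case (a b c d : ℂ)
    (hc : ∀ m' : ℕ, c ≠ -(m' : ℂ)) (hd : ∀ m' : ℤ, d ≠ (m' : ℂ))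
    (m : ℕ) (hm : 0 < m) (hbd : b - d = (m : ℂ)) :
    ∀ n : ℕ, ∀ z : ℂ,
      F22 a (b - n) c (d - n) z =
        ∑ k ∈ Finset.range (m + 1), poch a k * poch (d - b) k /
          (poch c k * poch (d - n) k) * (-z) ^ k / Nat.factorial k *
          F11 (a + k) (c + k) z := by
  intro n z
  have hbn : b - (n : ℂ) = (d - n) + m := by
    rw [← hbd]
    ring
  have hdb : d - b = -(m : ℂ) := by
    rw [← hbd]
    ring
  have hce : ∀ i : ℕ, c + (i : ℂ) ≠ 0 := by
    intro i h
    exact hc i (by linear_combination h)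
  have hee : ∀ i : ℕ, (d - n) + (i : ℂ) ≠ 0 := by
    intro i h
    apply hd ((n : ℤ) - (i : ℤ))
    push_cast
    linear_combination h
  have hck : ∀ k : ℕ, ∀ i : ℕ, (c + (k : ℂ)) + i ≠ 0 := by
    intro k i h
    apply hce (k + i)
    push_cast
    linear_combination h
  unfold F22 F11
  rw [hbn, hdb]
  have key : ∀ k : ℕ,
      poch a k * poch (-(m : ℂ)) k / (poch c k * poch (d - n) k) * (-z) ^ k /
          (Nat.factorial k : ℂ) *
        ∑' j : ℕ, poch (a + k) j / poch (c + k) j * z ^ j / (Nat.factorial j : ℂ)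
      = ∑' N : ℕ, (if k ≤ N then
          poch a k * poch (-(m : ℂ)) k / (poch c k * poch (d - n) k) * (-z) ^ k /
            (Nat.factorial k : ℂ) *
            (poch (a + k) (N - k) / poch (c + k) (N - k) * z ^ (N - k) /
              (Nat.factorial (N - k) : ℂ))
        else 0) := by
    intro k
    rw [← tsum_mul_left]
    rw [tsum_shift (fun j => poch a k * poch (-(m : ℂ)) k / (poch c k * poch (d - n) k) *
        (-z) ^ k / (Nat.factorial k : ℂ) *
        (poch (a + k) j / poch (c + k) j * z ^ j / (Nat.factorial j : ℂ))) k]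
  calc (∑' N : ℕ, poch a N * poch (d - ↑n + ↑m) N / (poch c N * poch (d - ↑n) N) * z ^ N /
        (Nat.factorial N : ℂ))
      = ∑' N : ℕ, ∑ k ∈ Finset.range (m + 1), (if k ≤ N then
          poch a k * poch (-(m : ℂ)) k / (poch c k * poch (d - n) k) * (-z) ^ k /
            (Nat.factorial k : ℂ) *
            (poch (a + k) (N - k) / poch (c + k) (N - k) * z ^ (N - k) /
              (Nat.factorial (N - k) : ℂ))
        else 0) := by
        apply tsum_congr
        intro N
        exact perN a c (d - n) z m hce hee N
    _ = ∑ k ∈ Finset.range (m + 1), ∑' N : ℕ, (if k ≤ N then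
          poch a k * poch (-(m : ℂ)) k / (poch c k * poch (d - n) k) * (-z) ^ k /
            (Nat.factorial k : ℂ) *
            (poch (a + k) (N - k) / poch (c + k) (N - k) * z ^ (N - k) /
              (Nat.factorial (N - k) : ℂ))
        else 0) := by
        apply Summable.tsum_finsetSum
        intro k _
        apply summable_shift (f := fun j : ℕ =>
          poch a k * poch (-(m : ℂ)) k / (poch c k * poch (d - n) k) * (-z) ^ k /
            (Nat.factorial k : ℂ) *
            (poch (a + k) j / poch (c + k) j * z ^ j / (Nat.factorial j : ℂ))) k
        exact Summable.mul_left _ (summable_hyp (a + k) (c + k) z (hck k))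
    _ = ∑ k ∈ Finset.range (m + 1),
          poch a k * poch (-(m : ℂ)) k / (poch c k * poch (d - n) k) * (-z) ^ k /
            (Nat.factorial k : ℂ) *
          ∑' j : ℕ, poch (a + k) j / poch (c + k) j * z ^ j / (Nat.factorial j : ℂ) := by
        apply Finset.sum_congr rfl
        intro k _
        exact (key k).symm
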